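/- Let G be a clique-grid graph with representation f: V(G) → [t] × [t'], and let 𝒞 be a family of pairwise vertex-disjoint induced cycles in G, each on at least 4 vertices, such that for each pair of distinct cells at most two cycles of 𝒞 cross that pair and for each triple of distinct cells at most two cycles of 𝒞 cross that triple. Then for every cell (i,j), the number of vertices of f⁻¹(i,j) that are endpoints of edges of cycles in 𝒞 whose endpoints lie in different cells is at most 2304. -/

import Mathlib

def IsRepresentation {V : Type*} (G : SimpleGraph V) (f : V → ℤ × ℤ) : Prop :=
  (∀ u v : V, u ≠ v → f u = f v → G.Adj u v) ∧
  (∀ u v : V, G.Adj u v → |(f u).1 - (f v).1| ≤ 2 ∧ |(f u).2 - (f v).2| ≤ 2)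

/-- A cycle with edge list `E` crosses the ordered pair of cells `(c1, c2)`: there are
two edges of the cycle from `c1` to `c2` whose `c2`-endpoints are distinct. -/
def OrientedCross {V : Type*} (f : V → ℤ × ℤ) (E : List (Sym2 V)) (c1 c2 : ℤ × ℤ) :
    Prop :=
  ∃ p q r t : V, f p = c1 ∧ f q = c1 ∧ f r = c2 ∧ f t = c2 ∧ r ≠ t ∧
    s(p, r) ∈ E ∧ s(q, t) ∈ E

/-- Crossing the unordered pair of cells `{c1, c2}`. -/
def CrossesPair {V : Type*} (f : V → ℤ × ℤ) (E : List (Sym2 V)) (c1 c2 : ℤ × ℤ) :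
    Prop :=
  OrientedCross f E c1 c2 ∨ OrientedCross f E c2 c1

/-- A cycle with edge list `E` crosses the ordered triple of cells `(c1, c2, c3)`: it has
an edge between `c1` and `c2` and an edge between `c2` and `c3`. -/
def OrientedTriple {V : Type*} (f : V → ℤ × ℤ) (E : List (Sym2 V))
    (c1 c2 c3 : ℤ × ℤ) : Prop :=
  ∃ p q r t : V, f p = c1 ∧ f q = c2 ∧ f r = c2 ∧ f t = c3 ∧
    s(p, q) ∈ E ∧ s(r, t) ∈ E

/-- Crossing the unordered triple of cells `{c1, c2, c3}`. -/
def CrossesTriple {V : Type*} (f : V → ℤ × ℤ) (E : List (Sym2 V))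
    (c1 c2 c3 : ℤ × ℤ) : Prop :=
  OrientedTriple f E c1 c2 c3 ∨ OrientedTriple f E c1 c3 c2 ∨
  OrientedTriple f E c2 c1 c3 ∨ OrientedTriple f E c2 c3 c1 ∨
  OrientedTriple f E c3 c1 c2 ∨ OrientedTriple f E c3 c2 c1

section Aux
open SimpleGraph Walk
open SimpleGraph Walk

variable {V : Type*} {G : SimpleGraph V}

lemma path_start_unique {u v y z : V} (p : G.Walk u v) (hp : p.IsPath)
    (hy : s(u, y) ∈ p.edges) (hz : s(u, z) ∈ p.edges) : y = z := by
  cases p with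
  | nil => simp at hy
  | @cons _ b _ h q =>
    rw [Walk.cons_isPath_iff] at hp
    rw [Walk.edges_cons, List.mem_cons] at hy hz
    have key : ∀ w : V, s(u, w) = s(u, b) ∨ s(u, w) ∈ q.edges → w = b := by
      intro w hw
      rcases hw with hw | hw
      · rw [Sym2.eq_iff] at hw
        rcases hw with ⟨-, rfl⟩ | ⟨h1, rfl⟩
        · rfl
        · exact absurd h1 h.ne
      · exact absurd (q.fst_mem_support_of_mem_edges hw) hp.2
    rw [key y hy, key z hz]

lemma cycle_start_nbrs {x : V} (W : G.Walk x x) (hW : W.IsCycle) :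
    ∃ y z, y ≠ z ∧ s(x, y) ∈ W.edges ∧ s(x, z) ∈ W.edges ∧
      ∀ w, s(x, w) ∈ W.edges → w = y ∨ w = z := by
  have hlen3 := hW.three_le_length
  cases W with
  | nil => exact absurd hW (Walk.IsCycle.not_of_nil)
  | @cons _ b _ h p =>
    rw [Walk.cons_isCycle_iff] at hW
    have hp : p.reverse.IsPath := hW.1.reverse
    obtain ⟨z, hz, q, hq⟩ := Walk.exists_eq_cons_of_ne h.ne p.reverse
    have hxz : s(x, z) ∈ p.edges := by
      have : s(x, z) ∈ p.reverse.edges := by rw [hq]; simp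
      rwa [Walk.edges_reverse, List.mem_reverse] at this
    have hzb : z ≠ b := by
      rintro rfl
      rw [hq, Walk.cons_isPath_iff] at hp
      have : q = Walk.nil := (Walk.isPath_iff_eq_nil (p := q)).mp hp.1
      subst this
      have : p.reverse.length = 1 := by rw [hq]; simp
      rw [Walk.length_reverse] at this
      simp only [Walk.length_cons] at hlen3
      omega
    refine ⟨b, z, hzb.symm, by simp, by simp [hxz], ?_⟩
    intro w hw
    rw [Walk.edges_cons, List.mem_cons] at hw
    rcases hw with hw | hw
    · rw [Sym2.eq_iff] at hw
      rcases hw with ⟨-, rfl⟩ | ⟨h1, rfl⟩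
      · exact Or.inl rfl
      · exact absurd h1 h.ne
    · right
      refine path_start_unique p.reverse hp ?_ (by rw [hq]; simp)
      rwa [Walk.edges_reverse, List.mem_reverse]

lemma cycle_nbrs [DecidableEq V] {v x : V} (W : G.Walk v v) (hW : W.IsCycle) (hx : x ∈ W.support) :
    ∃ y z, y ≠ z ∧ s(x, y) ∈ W.edges ∧ s(x, z) ∈ W.edges ∧
      ∀ w, s(x, w) ∈ W.edges → w = y ∨ w = z := by
  obtain ⟨y, z, hyz, hy, hz, hu⟩ := cycle_start_nbrs (W.rotate x hx) (hW.rotate hx)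
  have hmem : ∀ e : Sym2 V, e ∈ (W.rotate x hx).edges ↔ e ∈ W.edges :=
    fun e => (W.rotate_edges x hx).mem_iff
  exact ⟨y, z, hyz, (hmem _).mp hy, (hmem _).mp hz, fun w hw => hu w ((hmem _).mpr hw)⟩
variable {V : Type*} {G : SimpleGraph V}

lemma no_triangle [DecidableEq V] {v a b c : V} (W : G.Walk v v) (hW : W.IsCycle)
    (h4 : 4 ≤ W.length) (hab : s(a, b) ∈ W.edges) (hbc : s(b, c) ∈ W.edges)
    (hac : s(a, c) ∈ W.edges) (nab : a ≠ b) (nac : a ≠ c) (nbc : b ≠ c) : False := by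
  have ha : a ∈ W.support := W.fst_mem_support_of_mem_edges hab
  have hb : b ∈ W.support := W.fst_mem_support_of_mem_edges hbc
  have hc : c ∈ W.support := W.snd_mem_support_of_mem_edges hbc
  have uniq : ∀ u p q : V, u ≠ p → u ≠ q → p ≠ q → s(u, p) ∈ W.edges → s(u, q) ∈ W.edges →
      ∀ w, s(u, w) ∈ W.edges → w = p ∨ w = q := by
    intro u p q _ _ hpq hup huq w hw
    obtain ⟨y, z, hyz, -, -, hu⟩ := cycle_nbrs W hW (W.fst_mem_support_of_mem_edges hup)
    rcases hu p hup with rfl | rfl <;> rcases hu q huq with rfl | rfl <;>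
      first | exact absurd rfl hpq | (rcases hu w hw with rfl | rfl <;> tauto)
  have Ua := uniq a b c nab nac nbc hab hac
  have Ub := uniq b a c nab.symm nbc nac (Sym2.eq_swap ▸ hab) hbc
  have Uc := uniq c a b nac.symm nbc.symm nab (Sym2.eq_swap ▸ hac) (Sym2.eq_swap ▸ hbc)
  set P : V → Prop := fun w => w = a ∨ w = b ∨ w = c with hP
  have hclosed : ∀ u u' : V, s(u, u') ∈ W.edges → P u' → P u := by
    rintro u u' he (rfl | rfl | rfl)
    · rcases Ua u (Sym2.eq_swap ▸ he) with rfl | rfl <;> simp [hP]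
    · rcases Ub u (Sym2.eq_swap ▸ he) with rfl | rfl <;> simp [hP]
    · rcases Uc u (Sym2.eq_swap ▸ he) with rfl | rfl <;> simp [hP]
  have key : ∀ {p q : V} (w : G.Walk p q), (∀ e ∈ w.edges, e ∈ W.edges) → P q →
      ∀ x ∈ w.support, P x := by
    intro p q w
    induction w with
    | nil =>
      intro _ hq x hx
      rw [Walk.support_nil, List.mem_singleton] at hx
      subst hx; exact hq
    | @cons u u' q' h w ih =>
      intro hsub hq x hx
      have hall := ih (fun e he => hsub e (by simp [he])) hq
      rw [Walk.support_cons, List.mem_cons] at hx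
      rcases hx with rfl | hx
      · exact hclosed x u' (hsub _ (by simp)) (hall u' w.start_mem_support)
      · exact hall x hx
  have hrot : ∀ x ∈ (W.rotate a ha).support, P x :=
    key (W.rotate a ha) (fun e he => (W.rotate_edges a ha).mem_iff.mp he) (Or.inl rfl)
  have htail : ∀ x ∈ W.support.tail, P x := by
    intro x hx
    exact hrot x (List.mem_of_mem_tail ((W.support_rotate a ha).mem_iff.mpr hx))
  have hnodup : W.support.tail.Nodup := hW.support_nodup
  have hsub : W.support.tail.toFinset ⊆ ({a, b, c} : Finset V) := by
    intro x hx
    rcases htail x (List.mem_toFinset.mp hx) with rfl | rfl | rfl <;> simp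
  have hcard := Finset.card_le_card hsub
  rw [List.toFinset_card_of_nodup hnodup] at hcard
  have h1 : W.support.tail.length = W.length := by
    have := W.length_support
    have := W.support.length_tail
    omega
  have h3 : ({a, b, c} : Finset V).card ≤ 3 :=
    (Finset.card_insert_le _ _).trans (by
      have := Finset.card_insert_le b ({c} : Finset V); rw [Finset.card_singleton] at this; omega)
  omega

lemma ncard_biUnion_le' {α β : Type*} [Fintype α] (t : Finset β) (F : β → Set α) :
    (⋃ b ∈ t, F b).ncard ≤ ∑ b ∈ t, (F b).ncard := by
  classical
  induction t using Finset.induction with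
  | empty => simp
  | @insert a s ha ih =>
    rw [Finset.set_biUnion_insert, Finset.sum_insert ha]
    exact (Set.ncard_union_le _ _).trans (Nat.add_le_add_left ih _)

lemma cover_bound {α β : Type*} [Fintype α] (s : Set α) (t : Finset β) (F : β → Set α)
    (k : ℕ) (hF : ∀ b ∈ t, (F b).ncard ≤ k) (hs : ∀ a ∈ s, ∃ b ∈ t, a ∈ F b) :
    s.ncard ≤ t.card * k := by
  calc s.ncard ≤ (⋃ b ∈ t, F b).ncard := by
        refine Set.ncard_le_ncard (fun a ha => ?_) (Set.toFinite _)
        obtain ⟨b, hb, hab⟩ := hs a ha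
        exact Set.mem_biUnion hb hab
    _ ≤ ∑ b ∈ t, (F b).ncard := ncard_biUnion_le' t F
    _ ≤ ∑ _b ∈ t, k := Finset.sum_le_sum hF
    _ = t.card * k := by rw [Finset.sum_const, smul_eq_mul]

end Aux

/-- For a simple family of pairwise vertex-disjoint induced cycles (each pair of cells is
crossed by at most two cycles, and each triple of cells is crossed by at most two
cycles), every cell contains at most 2304 vertices incident to inter-cell edges of the
cycles. -/
theorem simple_family_bounded_crossing_vertices {V : Type*} [Fintype V]
    (G : SimpleGraph V) (f : V → ℤ × ℤ) (hrep : IsRepresentation G f)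
    (m : ℕ) (c : Fin m → Σ v : V, G.Walk v v)
    (hcyc : ∀ i, (c i).2.IsCycle)
    (hlen : ∀ i, 4 ≤ (c i).2.length)
    (hind : ∀ i, ∀ x ∈ (c i).2.support, ∀ y ∈ (c i).2.support,
      G.Adj x y → s(x, y) ∈ (c i).2.edges)
    (hdisj : ∀ i j, i ≠ j → ∀ x, x ∈ (c i).2.support → x ∉ (c j).2.support)
    (hpair : ∀ c1 c2 : ℤ × ℤ, c1 ≠ c2 →
      {i | CrossesPair f (c i).2.edges c1 c2}.ncard ≤ 2)
    (htriple : ∀ c1 c2 c3 : ℤ × ℤ, c1 ≠ c2 → c1 ≠ c3 → c2 ≠ c3 →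
      {i | CrossesTriple f (c i).2.edges c1 c2 c3}.ncard ≤ 2) :
    ∀ cc : ℤ × ℤ,
      {x : V | f x = cc ∧ ∃ i, ∃ y : V,
        s(x, y) ∈ (c i).2.edges ∧ f y ≠ f x}.ncard ≤ 2304 := by
  classical
  intro cc
  -- at most 2 vertices of any cycle in any one cell
  have hcell : ∀ (i : Fin m) (a b d : V), a ∈ (c i).2.support → b ∈ (c i).2.support →
      d ∈ (c i).2.support → f a = f b → f a = f d → a = b ∨ a = d ∨ b = d := by
    intro i a b d ha hb hd hab had
    by_contra hcon
    push_neg at hcon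
    obtain ⟨nab, nad, nbd⟩ := hcon
    have e1 : s(a, b) ∈ (c i).2.edges := hind i a ha b hb (hrep.1 a b nab hab)
    have e2 : s(b, d) ∈ (c i).2.edges :=
      hind i b hb d hd (hrep.1 b d nbd (hab ▸ had))
    have e3 : s(a, d) ∈ (c i).2.edges := hind i a ha d hd (hrep.1 a d nad had)
    exact no_triangle (c i).2 (hcyc i) (hlen i) e1 e2 e3 nab nad nbd
  have hA : ∀ i : Fin m, {x | f x = cc ∧ x ∈ (c i).2.support}.ncard ≤ 2 := by
    intro i
    by_contra hcon
    push_neg at hcon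
    obtain ⟨a, ha, b, hb, d, hd, nab, nad, nbd⟩ :=
      (Set.two_lt_ncard (Set.toFinite _)).mp hcon
    rcases hcell i a b d ha.2 hb.2 hd.2 (ha.1.trans hb.1.symm) (ha.1.trans hd.1.symm) with
      h | h | h
    exacts [nab h, nad h, nbd h]
  set Box : Finset (ℤ × ℤ) :=
    ((Finset.Icc (cc.1 - 2) (cc.1 + 2)) ×ˢ (Finset.Icc (cc.2 - 2) (cc.2 + 2))).erase cc
    with hBox
  have hBoxcard : Box.card = 24 := by
    rw [hBox, Finset.card_erase_of_mem (by simp only [Finset.mem_product, Finset.mem_Icc]; omega),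
      Finset.card_product, Int.card_Icc, Int.card_Icc]
    have h1 : cc.1 + 2 + 1 - (cc.1 - 2) = 5 := by ring
    have h2 : cc.2 + 2 + 1 - (cc.2 - 2) = 5 := by ring
    rw [h1, h2]
    rfl
  have hmemBox : ∀ u w : V, G.Adj u w → f u = cc → f w ≠ cc → f w ∈ Box := by
    intro u w h hu hw
    obtain ⟨h1, h2⟩ := hrep.2 u w h
    rw [hu] at h1 h2
    rw [abs_le] at h1 h2
    rw [hBox, Finset.mem_erase]
    refine ⟨hw, ?_⟩
    rw [Finset.mem_product, Finset.mem_Icc, Finset.mem_Icc]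
    omega
  set I : Set (Fin m) := {i | ∃ x y : V, f x = cc ∧ s(x, y) ∈ (c i).2.edges ∧ f y ≠ cc}
    with hI
  set F : (ℤ × ℤ) × (ℤ × ℤ) → Set (Fin m) := fun σ =>
    if σ.1 = σ.2 then {i | CrossesPair f (c i).2.edges cc σ.1}
    else {i | CrossesTriple f (c i).2.edges σ.1 cc σ.2} with hF
  have hFb : ∀ σ ∈ Box ×ˢ Box, (F σ).ncard ≤ 2 := by
    intro σ hσ
    rw [Finset.mem_product] at hσ
    have h1 : σ.1 ≠ cc := Finset.ne_of_mem_erase hσ.1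
    have h2 : σ.2 ≠ cc := Finset.ne_of_mem_erase hσ.2
    by_cases h : σ.1 = σ.2
    · rw [hF]; simp only [if_pos h]; exact hpair cc σ.1 (Ne.symm h1)
    · rw [hF]; simp only [if_neg h]; exact htriple σ.1 cc σ.2 h1 h (Ne.symm h2)
  have hIcover : ∀ i ∈ I, ∃ σ ∈ Box ×ˢ Box, i ∈ F σ := by
    rintro i ⟨x, y, hfx, hxy, hfy⟩
    have hadjxy : G.Adj x y := SimpleGraph.Walk.adj_of_mem_edges _ hxy
    have hxs : x ∈ (c i).2.support := SimpleGraph.Walk.fst_mem_support_of_mem_edges _ hxy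
    have hyBox : f y ∈ Box := hmemBox x y hadjxy hfx hfy
    obtain ⟨y0, z0, hyz0, hy0, hz0, hu0⟩ := cycle_nbrs (c i).2 (hcyc i) hxs
    obtain ⟨z, hzy, hxz⟩ : ∃ z, z ≠ y ∧ s(x, z) ∈ (c i).2.edges := by
      rcases hu0 y hxy with rfl | rfl
      · exact ⟨z0, fun h => hyz0 h.symm, hz0⟩
      · exact ⟨y0, fun h => hyz0 h, hy0⟩
    have hadjxz : G.Adj x z := SimpleGraph.Walk.adj_of_mem_edges _ hxz
    by_cases hz2 : f z = f y
    · -- two edges from x to cell (f y): CrossesPair cc (f y)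
      refine ⟨(f y, f y), Finset.mem_product.mpr ⟨hyBox, hyBox⟩, ?_⟩
      rw [hF]; simp only [if_pos rfl]
      exact Or.inl ⟨x, x, y, z, hfx, hfx, rfl, hz2, fun h => hzy h.symm, hxy, hxz⟩
    · by_cases hzc : f z = cc
      · -- second vertex of the cycle in cell cc
        have hzx : z ≠ x := fun h => hadjxz.ne h.symm
        have hzs : z ∈ (c i).2.support :=
          SimpleGraph.Walk.fst_mem_support_of_mem_edges _ (Sym2.eq_swap ▸ hxz)
        obtain ⟨y1, z1, hyz1, hy1, hz1, -⟩ := cycle_nbrs (c i).2 (hcyc i) hzs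
        obtain ⟨w, hwx, hzw⟩ : ∃ w, w ≠ x ∧ s(z, w) ∈ (c i).2.edges := by
          by_cases h : y1 = x
          · exact ⟨z1, fun hh => hyz1 (h.trans hh.symm), hz1⟩
          · exact ⟨y1, h, hy1⟩
        have hadjzw : G.Adj z w := SimpleGraph.Walk.adj_of_mem_edges _ hzw
        have hws : w ∈ (c i).2.support :=
          SimpleGraph.Walk.snd_mem_support_of_mem_edges _ hzw
        have hfw : f w ≠ cc := by
          intro hfw
          rcases hcell i x z w hxs hzs hws (hfx.trans hzc.symm) (hfx.trans hfw.symm) with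
            h | h | h
          exacts [hzx h.symm, hwx h.symm, hadjzw.ne h]
        have hwBox : f w ∈ Box := hmemBox z w hadjzw hzc hfw
        by_cases h42 : f w = f y
        · -- edges (x,y) and (z,w) both between cc and (f y): CrossesPair
          refine ⟨(f y, f y), Finset.mem_product.mpr ⟨hyBox, hyBox⟩, ?_⟩
          rw [hF]; simp only [if_pos rfl]
          refine Or.inr ⟨y, w, x, z, rfl, h42, hfx, hzc, fun h => hzx h.symm, ?_, ?_⟩
          · rw [Sym2.eq_swap]; exact hxy
          · rw [Sym2.eq_swap]; exact hzw
        · -- triple (f y, cc, f w)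
          refine ⟨(f y, f w), Finset.mem_product.mpr ⟨hyBox, hwBox⟩, ?_⟩
          rw [hF]; simp only [if_neg (fun h => h42 (Eq.symm h))]
          refine Or.inl ⟨y, x, z, w, rfl, hfx, hzc, rfl, ?_, hzw⟩
          rw [Sym2.eq_swap]; exact hxy
      · -- triple (f y, cc, f z)
        have hzBox : f z ∈ Box := hmemBox x z hadjxz hfx hzc
        refine ⟨(f y, f z), Finset.mem_product.mpr ⟨hyBox, hzBox⟩, ?_⟩
        rw [hF]; simp only [if_neg (fun h => hz2 (Eq.symm h))]
        refine Or.inl ⟨y, x, x, z, rfl, hfx, hfx, rfl, ?_, hxz⟩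
        rw [Sym2.eq_swap]; exact hxy
  have hIcard : I.ncard ≤ 1152 := by
    have := cover_bound I (Box ×ˢ Box) F 2 hFb hIcover
    rwa [Finset.card_product, hBoxcard] at this
  set IFin : Finset (Fin m) := (Set.toFinite I).toFinset with hIFin
  have hIFincard : IFin.card ≤ 1152 := by
    rwa [hIFin, ← Set.ncard_eq_toFinset_card _ (Set.toFinite I)]
  have hScover : ∀ x ∈ {x : V | f x = cc ∧ ∃ i, ∃ y : V,
      s(x, y) ∈ (c i).2.edges ∧ f y ≠ f x}, ∃ i ∈ IFin,
      x ∈ {x | f x = cc ∧ x ∈ (c i).2.support} := by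
    rintro x ⟨hfx, i, y, hxy, hfy⟩
    refine ⟨i, ?_, hfx, SimpleGraph.Walk.fst_mem_support_of_mem_edges _ hxy⟩
    rw [hIFin, Set.Finite.mem_toFinset]
    exact ⟨x, y, hfx, hxy, fun h => hfy (h.trans hfx.symm) ⟩
  have := cover_bound _ IFin (fun i => {x | f x = cc ∧ x ∈ (c i).2.support}) 2
    (fun i _ => hA i) hScover
  calc {x : V | f x = cc ∧ ∃ i, ∃ y : V,
        s(x, y) ∈ (c i).2.edges ∧ f y ≠ f x}.ncard ≤ IFin.card * 2 := this
    _ ≤ 1152 * 2 := by omega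
    _ = 2304 := by norm_num
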